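/- Let n ≥ 1 and let ξ be an n×n complex symmetric matrix whose real part Re(ξ) is positive semidefinite or negative semidefinite and whose imaginary part Im(ξ) is positive semidefinite or negative semidefinite. Then the set { G : G is a real symmetric positive definite n×n matrix and Tr(ξ·G·ξ̄·G) < 1 } is a convex subset of the real vector space of symmetric n×n matrices. (Here Tr(ξ·G·ξ̄·G) is a real number.) -/

import Mathlib

open Matrix

-- trace of mapped matrix
lemma trace_map_ofReal {n : ℕ} (A : Matrix (Fin n) (Fin n) ℝ) :
    (A.map (Complex.ofReal)).trace = (A.trace : ℂ) := by
  simp [Matrix.trace, Matrix.diag, Matrix.map_apply]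

-- smul PosDef
lemma posDef_smul {n : ℕ} {M : Matrix (Fin n) (Fin n) ℝ} (hM : M.PosDef) {c : ℝ} (hc : 0 < c) :
    (c • M).PosDef := by
  refine Matrix.PosDef.of_dotProduct_mulVec_pos ?_ (fun x hx => ?_)
  · unfold Matrix.IsHermitian at *
    rw [conjTranspose_smul, hM.1]
    simp
  · simp only [smul_mulVec, dotProduct_smul, smul_eq_mul]
    exact mul_pos hc (hM.dotProduct_mulVec_pos hx)

lemma posSemidef_smul {n : ℕ} {M : Matrix (Fin n) (Fin n) ℝ} (hM : M.PosSemidef) {c : ℝ}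
    (hc : 0 ≤ c) : (c • M).PosSemidef := by
  refine Matrix.PosSemidef.of_dotProduct_mulVec_nonneg ?_ (fun x => ?_)
  · unfold Matrix.IsHermitian at *
    rw [conjTranspose_smul, hM.1]
    simp
  · simp only [smul_mulVec, dotProduct_smul, smul_eq_mul]
    exact mul_nonneg hc (hM.dotProduct_mulVec_nonneg x)

-- nonnegativity of trace(R G R G) for R PSD, G symmetric
open scoped MatrixOrder in
lemma trace_RGRG_nonneg {n : ℕ} {R G : Matrix (Fin n) (Fin n) ℝ}
    (hR : R.PosSemidef) (hG : G.IsSymm) : 0 ≤ (R * G * R * G).trace := by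
  set s := CFC.sqrt R with hs
  have hss : s * s = R := CFC.sqrt_mul_sqrt_self R hR.nonneg
  have hsym : sᵀ = s := by
    have h := (CFC.sqrt_nonneg R).posSemidef.isHermitian
    rwa [Matrix.IsHermitian, conjTranspose_eq_transpose_of_trivial] at h
  set M := s * G * s with hM
  have hMsym : Mᵀ = M := by
    rw [hM, transpose_mul, transpose_mul, hsym, hG.eq, mul_assoc]
  have key : (R * G * R * G).trace = (M * M).trace := by
    rw [← hss]
    rw [show s * s * G * (s * s) * G = s * (s * G * s * (s * G)) by
      simp only [mul_assoc]]
    rw [trace_mul_comm, hM]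
    simp only [mul_assoc]
  rw [key]
  rw [Matrix.trace]
  apply Finset.sum_nonneg
  intro i _
  rw [Matrix.diag_apply, Matrix.mul_apply]
  apply Finset.sum_nonneg
  intro j _
  have hji : M j i = M i j := by
    calc M j i = Mᵀ i j := rfl
    _ = M i j := by rw [hMsym]
  rw [hji]
  exact mul_self_nonneg _

lemma map_mul_ofReal {n : ℕ} (A B : Matrix (Fin n) (Fin n) ℝ) :
    (A.map Complex.ofReal) * (B.map Complex.ofReal) = (A * B).map Complex.ofReal := by
  ext i k
  simp [Matrix.mul_apply, Matrix.map_apply]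

lemma trace_eq_re {n : ℕ} (ξ : Matrix (Fin n) (Fin n) ℂ) (G : Matrix (Fin n) (Fin n) ℝ) :
    (ξ * G.map Complex.ofReal * ξ.map (starRingEnd ℂ) * G.map Complex.ofReal).trace
      = ((((ξ.map Complex.re) * G * (ξ.map Complex.re) * G).trace
        + ((ξ.map Complex.im) * G * (ξ.map Complex.im) * G).trace : ℝ) : ℂ) := by
  set R := ξ.map Complex.re with hR
  set S := ξ.map Complex.im with hS
  set G' := G.map Complex.ofReal with hG'
  have hξs : ξ.map (starRingEnd ℂ) = R.map Complex.ofReal - Complex.I • S.map Complex.ofReal := by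
    ext i j
    simp [hR, hS, Matrix.map_apply, Matrix.sub_apply, Matrix.smul_apply, smul_eq_mul,
      Complex.ext_iff]
  have hξ : ξ = R.map Complex.ofReal + Complex.I • S.map Complex.ofReal := by
    ext i j
    simp [hR, hS, Matrix.map_apply, Matrix.add_apply, Matrix.smul_apply, smul_eq_mul,
      Complex.ext_iff]
  rw [hξs, hξ]
  set X := R.map Complex.ofReal * G' with hX
  set Y := S.map Complex.ofReal * G' with hY
  have expand : (R.map Complex.ofReal + Complex.I • S.map Complex.ofReal) * G'
      * (R.map Complex.ofReal - Complex.I • S.map Complex.ofReal) * G'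
      = X * X + Y * Y + (Complex.I • (Y * X) - Complex.I • (X * Y)) := by
    simp only [add_mul, sub_mul, mul_sub, mul_add, smul_mul_assoc, mul_smul_comm, smul_smul,
      smul_add, Complex.I_mul_I, hX, hY, mul_assoc]
    module
  rw [expand]
  have hYX : (Y * X).trace = (X * Y).trace := trace_mul_comm Y X
  rw [trace_add, trace_add, trace_sub, trace_smul, trace_smul, hYX]
  have hXX : (X * X).trace = (((R * G * R * G).trace : ℝ) : ℂ) := by
    rw [hX, hG', map_mul_ofReal, map_mul_ofReal, trace_map_ofReal]
    congr 1
    simp [mul_assoc]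
  have hYY : (Y * Y).trace = (((S * G * S * G).trace : ℝ) : ℂ) := by
    rw [hY, hG', map_mul_ofReal, map_mul_ofReal, trace_map_ofReal]
    congr 1
    simp [mul_assoc]
  rw [hXX, hYY]
  push_cast
  ring

lemma trace_nonneg_of_sign {n : ℕ} {R G : Matrix (Fin n) (Fin n) ℝ} (hRsym : R.IsSymm)
    (h : (∀ v : Fin n → ℝ, 0 ≤ dotProduct v (R.mulVec v)) ∨
         (∀ v : Fin n → ℝ, dotProduct v (R.mulVec v) ≤ 0))
    (hG : G.IsSymm) : 0 ≤ (R * G * R * G).trace := by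
  rcases h with h | h
  · exact trace_RGRG_nonneg
      (Matrix.PosSemidef.of_dotProduct_mulVec_nonneg (by rw [Matrix.IsHermitian, conjTranspose_eq_transpose_of_trivial]; exact hRsym)
       (fun x => by simpa using h x)) hG
  · have hneg : (-R).PosSemidef := by
      refine Matrix.PosSemidef.of_dotProduct_mulVec_nonneg ?_ (fun x => ?_)
      · rw [Matrix.IsHermitian, conjTranspose_neg, conjTranspose_eq_transpose_of_trivial, hRsym.eq]
      · have hx := h x
        simp only [neg_mulVec, dotProduct_neg, star_trivial]
        linarith
    have := trace_RGRG_nonneg hneg hG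
    simpa [neg_mul, mul_neg, neg_neg] using this

lemma quad_combo {n : ℕ} (R G H : Matrix (Fin n) (Fin n) ℝ) (a b : ℝ) :
    (R * (a • G + b • H) * R * (a • G + b • H)).trace
      = a ^ 2 * (R * G * R * G).trace + (2 * a * b) * (R * G * R * H).trace
        + b ^ 2 * (R * H * R * H).trace := by
  have hc : (R * H * R * G).trace = (R * G * R * H).trace := by
    rw [mul_assoc, trace_mul_comm, ← mul_assoc]
  simp only [mul_add, add_mul, smul_mul_assoc, mul_smul_comm, trace_add, trace_smul, smul_smul,
    smul_eq_mul]
  rw [hc]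
  ring

lemma quad_sub {n : ℕ} (R G H : Matrix (Fin n) (Fin n) ℝ) :
    (R * (G - H) * R * (G - H)).trace
      = (R * G * R * G).trace - 2 * (R * G * R * H).trace + (R * H * R * H).trace := by
  have hc : (R * H * R * G).trace = (R * G * R * H).trace := by
    rw [mul_assoc, trace_mul_comm, ← mul_assoc]
  simp only [mul_sub, sub_mul, trace_sub]
  rw [hc]
  ring

/-- if `ξ` is complex symmetric with `Re ξ` and `Im ξ` each positive or
negative semidefinite, the set of real symmetric positive definite matrices `G` with
`Tr(ξ·G·ξ̄·G) < 1` is convex. -/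
theorem statement4 (n : ℕ) (hn : 1 ≤ n)
    (ξ : Matrix (Fin n) (Fin n) ℂ) (hξsym : ξ.IsSymm)
    (hRe : (∀ v : Fin n → ℝ, 0 ≤ dotProduct v ((ξ.map Complex.re).mulVec v)) ∨
           (∀ v : Fin n → ℝ, dotProduct v ((ξ.map Complex.re).mulVec v) ≤ 0))
    (hIm : (∀ v : Fin n → ℝ, 0 ≤ dotProduct v ((ξ.map Complex.im).mulVec v)) ∨
           (∀ v : Fin n → ℝ, dotProduct v ((ξ.map Complex.im).mulVec v) ≤ 0)) :
    Convex ℝ {G : Matrix (Fin n) (Fin n) ℝ | G.IsSymm ∧ G.PosDef ∧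
      (Matrix.trace
        (ξ * G.map Complex.ofReal * ξ.map (starRingEnd ℂ) * G.map Complex.ofReal)).re < 1} := by
  set R := ξ.map Complex.re with hRdef
  set S := ξ.map Complex.im with hSdef
  have hξij : ∀ i j, ξ j i = ξ i j := fun i j => congrFun (congrFun hξsym.eq i) j
  have hRsym : R.IsSymm := by
    ext i j
    simp only [hRdef, Matrix.transpose_apply, Matrix.map_apply, hξij]
  have hSsym : S.IsSymm := by
    ext i j
    simp only [hSdef, Matrix.transpose_apply, Matrix.map_apply, hξij]
  intro G hG H hH a b ha hb hab
  obtain ⟨hG1, hG2, hG3⟩ := hG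
  obtain ⟨hH1, hH2, hH3⟩ := hH
  -- rewrite the trace conditions using trace_eq_re
  rw [trace_eq_re, Complex.ofReal_re] at hG3 hH3
  rw [Set.mem_setOf_eq, trace_eq_re, Complex.ofReal_re]
  refine ⟨(hG1.smul a).add (hH1.smul b), ?_, ?_⟩
  · -- positive definiteness
    rcases eq_or_lt_of_le ha with h0 | h0
    · have hb1 : b = 1 := by linarith
      simpa [← h0, hb1] using hH2
    · exact (posDef_smul hG2 h0).add_posSemidef (posSemidef_smul hH2.posSemidef hb)
  · -- trace inequality
    have hGHsym : (G - H).IsSymm := by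
      rw [Matrix.IsSymm, transpose_sub, hG1.eq, hH1.eq]
    have hRsub : 0 ≤ (R * (G - H) * R * (G - H)).trace :=
      trace_nonneg_of_sign hRsym hRe hGHsym
    have hSsub : 0 ≤ (S * (G - H) * S * (G - H)).trace :=
      trace_nonneg_of_sign hSsym hIm hGHsym
    rw [quad_sub] at hRsub hSsub
    rw [quad_combo, quad_combo]
    set xR := (R * G * R * G).trace
    set tR := (R * G * R * H).trace
    set yR := (R * H * R * H).trace
    set xS := (S * G * S * G).trace
    set tS := (S * G * S * H).trace
    set yS := (S * H * S * H).trace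
    have hb' : b = 1 - a := by linarith
    have hkeyR : a * xR + b * yR - (a ^ 2 * xR + 2 * a * b * tR + b ^ 2 * yR)
        = a * b * (xR - 2 * tR + yR) := by rw [hb']; ring
    have hkeyS : a * xS + b * yS - (a ^ 2 * xS + 2 * a * b * tS + b ^ 2 * yS)
        = a * b * (xS - 2 * tS + yS) := by rw [hb']; ring
    have hcomboR : a ^ 2 * xR + 2 * a * b * tR + b ^ 2 * yR ≤ a * xR + b * yR := by
      linarith [mul_nonneg (mul_nonneg ha hb) hRsub]
    have hcomboS : a ^ 2 * xS + 2 * a * b * tS + b ^ 2 * yS ≤ a * xS + b * yS := by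
      linarith [mul_nonneg (mul_nonneg ha hb) hSsub]
    have hfinal : a * xR + b * yR + (a * xS + b * yS) < 1 := by
      rcases eq_or_lt_of_le ha with h0 | h0
      · have hb1 : b = 1 := by linarith
        rw [← h0, hb1]
        simpa using hH3
      · nlinarith
    linarith
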